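/- Let S be a set of 2n distinct points in ℝ² (n ≥ 1). Suppose there is a point x ∈ ℝ² with x ∉ S such that every perfect line contains x and every perfect line is even-balanced about x. Then x is a winning point for Alice; in particular, Alice wins. -/

import Mathlib

open scoped RealInnerProductSpace

/-- `claims S a b` is the number of voters in `S` strictly closer to `a` than to `b`.
Thus `V_A(a,b) = claims S a b` and `V_B(a,b) = claims S b a`. -/
noncomputable def claims {d : ℕ} (S : Finset (EuclideanSpace ℝ (Fin d)))
    (a b : EuclideanSpace ℝ (Fin d)) : ℕ :=
  (S.filter fun x => dist a x < dist b x).card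

/-- `a` is a winning point for Alice: `V_A(a,b) ≥ V_B(a,b)` for every `b`. -/
def IsWinningPoint {d : ℕ} (S : Finset (EuclideanSpace ℝ (Fin d)))
    (a : EuclideanSpace ℝ (Fin d)) : Prop :=
  ∀ b : EuclideanSpace ℝ (Fin d), claims S b a ≤ claims S a b

open scoped Classical in
/-- The number of points of `S` on the open half-line `{x + t • v : t > 0}`. -/
noncomputable def rayCount {d : ℕ} (S : Finset (EuclideanSpace ℝ (Fin d)))
    (x v : EuclideanSpace ℝ (Fin d)) : ℕ :=
  (S.filter fun y => ∃ t : ℝ, 0 < t ∧ y = x + t • v).card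

/-- The line `{y | ⟪y,c⟫ = lam}` is perfect (even case): each open side contains fewer than
`|S|/2` points of `S`. -/
noncomputable def IsPerfectEven {d : ℕ} (S : Finset (EuclideanSpace ℝ (Fin d)))
    (c : EuclideanSpace ℝ (Fin d)) (lam : ℝ) : Prop :=
  2 * (S.filter fun y => lam < ⟪y, c⟫).card < S.card ∧
  2 * (S.filter fun y => ⟪y, c⟫ < lam).card < S.card

local notation "E2" => EuclideanSpace ℝ (Fin 2)

private lemma inner_two (a b : E2) : ⟪a, b⟫ = a 0 * b 0 + a 1 * b 1 := by
  simp [PiLp.inner_apply, RCLike.inner_apply, Fin.sum_univ_two]; ring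

private lemma ne_zero_coord {a : E2} (h : a ≠ 0) : a 0 ≠ 0 ∨ a 1 ≠ 0 := by
  by_contra hc
  push_neg at hc
  exact h (by ext i; fin_cases i <;> simp [hc.1, hc.2])

/-- In ℝ², two vectors orthogonal to the same nonzero vector are parallel. -/
private lemma span_of_orth {c v w : E2} (hc : c ≠ 0) (hv : v ≠ 0)
    (hvc : ⟪v, c⟫ = 0) (hwc : ⟪w, c⟫ = 0) : ∃ t : ℝ, w = t • v := by
  rw [inner_two] at hvc hwc
  have hdet : w 0 * v 1 = w 1 * v 0 := by
    rcases ne_zero_coord hc with h | h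
    · apply mul_left_cancel₀ h
      linear_combination v 1 * hwc - w 1 * hvc
    · apply mul_left_cancel₀ h
      linear_combination w 0 * hvc - v 0 * hwc
  rcases ne_zero_coord hv with h | h
  · refine ⟨w 0 / v 0, ?_⟩
    ext i
    fin_cases i
    · show w 0 = w 0 / v 0 * v 0; field_simp
    · show w 1 = w 0 / v 0 * v 1; field_simp; nlinarith [hdet]
  · refine ⟨w 1 / v 1, ?_⟩
    ext i
    fin_cases i
    · show w 0 = w 1 / v 1 * v 0; field_simp; nlinarith [hdet]
    · show w 1 = w 1 / v 1 * v 1; field_simp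

noncomputable def Jrot (v : E2) : E2 := (WithLp.equiv 2 (Fin 2 → ℝ)).symm ![-(v 1), v 0]

lemma Jrot_apply0 (v : E2) : Jrot v 0 = -(v 1) := rfl
lemma Jrot_apply1 (v : E2) : Jrot v 1 = v 0 := rfl

lemma Jrot_orth (v : E2) : ⟪v, Jrot v⟫ = 0 := by
  rw [inner_two, Jrot_apply0, Jrot_apply1]; ring

lemma Jrot_ne_zero {v : E2} (hv : v ≠ 0) : Jrot v ≠ 0 := by
  intro h
  apply hv
  have h0 : Jrot v 0 = 0 := by rw [h]; rfl
  have h1 : Jrot v 1 = 0 := by rw [h]; rfl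
  rw [Jrot_apply0] at h0
  rw [Jrot_apply1] at h1
  ext i
  fin_cases i
  · exact h1
  · show v 1 = 0; linarith [h0]

private lemma core_sweep (S : Finset E2) (n : ℕ) (hn : 1 ≤ n) (hcard : S.card = 2 * n)
    (q : E2) (hq : q ∈ S) (A B : E2 → ℝ) (hA : A q = 0) (hB : B q = 0)
    (T : ℝ) (hT : 0 ≤ T)
    (h0 : n ≤ (S.filter fun y => 0 < A y).card)
    (hT' : (S.filter fun y => 0 < A y + T * B y).card < n) :
    ∃ t : ℝ, (S.filter fun y => 0 < A y + t * B y).card < n ∧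
      (S.filter fun y => A y + t * B y < 0).card < n := by
  classical
  set g : ℝ → ℕ := fun t => (S.filter fun y => 0 < A y + t * B y).card with hg
  -- basic counting: pos count + neg count + 1 ≤ 2n
  have hcount : ∀ t : ℝ, g t + (S.filter fun y => A y + t * B y < 0).card + 1 ≤ 2 * n := by
    intro t
    set P := S.filter fun y => 0 < A y + t * B y with hP
    set N := S.filter fun y => A y + t * B y < 0 with hN
    have hdisj : Disjoint P N := by
      rw [Finset.disjoint_left]
      intro a ha hb
      simp only [hP, hN, Finset.mem_filter] at ha hb
      linarith [ha.2, hb.2]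
    have hsub : P ∪ N ⊆ S.erase q := by
      intro a ha
      have h' : a ∈ S ∧ (0 < A a + t * B a ∨ A a + t * B a < 0) := by
        rcases Finset.mem_union.1 ha with h | h <;>
          simp only [hP, hN, Finset.mem_filter] at h <;> tauto
      refine Finset.mem_erase.2 ⟨?_, h'.1⟩
      rintro rfl
      rw [hA, hB] at h'
      rcases h'.2 with h | h <;> simp at h
    have h1 : P.card + N.card ≤ (S.erase q).card := by
      rw [← Finset.card_union_of_disjoint hdisj]
      exact Finset.card_le_card hsub
    have h2 : (S.erase q).card = S.card - 1 := Finset.card_erase_of_mem hq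
    have h3 : g t = P.card := rfl
    omega
  have h0' : n ≤ g 0 := by
    have he : (fun y => 0 < A y + 0 * B y) = fun y => 0 < A y := by
      funext y; rw [zero_mul, add_zero]
    simpa [hg, he] using h0
  -- the set of admissible times
  set Aset : Set ℝ := {t | t ∈ Set.Icc (0:ℝ) T ∧ g t < n} with hAset
  have hTA : T ∈ Aset := ⟨⟨hT, le_refl T⟩, hT'⟩
  have hne : Aset.Nonempty := ⟨T, hTA⟩
  have hbdd : BddBelow Aset := ⟨0, fun a ha => ha.1.1⟩
  set t₀ : ℝ := sInf Aset with ht₀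
  have ht₀0 : 0 ≤ t₀ := le_csInf hne fun a ha => ha.1.1
  have ht₀T : t₀ ≤ T := csInf_le hbdd hTA
  -- persistence of strict sign conditions on finite sets
  have persist : ∀ (F : Finset E2) (sgn : ℝ), F.Nonempty → (sgn = 1 ∨ sgn = -1) →
      (∀ y ∈ F, 0 < sgn * (A y + t₀ * B y)) →
      ∃ δ > 0, ∀ s : ℝ, |s - t₀| < δ → ∀ y ∈ F, 0 < sgn * (A y + s * B y) := by
    intro F sgn hFne hsgn hF
    have habs1 : |sgn| = 1 := by rcases hsgn with rfl | rfl <;> simp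
    refine ⟨F.inf' hFne (fun y => sgn * (A y + t₀ * B y) / (|B y| + 1)), ?_, ?_⟩
    · rw [gt_iff_lt, Finset.lt_inf'_iff]
      intro y hy
      have h1 := hF y hy
      positivity
    · intro s hs y hy
      have hδ : F.inf' hFne (fun y => sgn * (A y + t₀ * B y) / (|B y| + 1)) ≤
          sgn * (A y + t₀ * B y) / (|B y| + 1) := Finset.inf'_le _ hy
      have h1 := hF y hy
      have hBpos : (0:ℝ) < |B y| + 1 := by positivity
      have h2 : |s - t₀| < sgn * (A y + t₀ * B y) / (|B y| + 1) := lt_of_lt_of_le hs hδ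
      have h3 : |s - t₀| * (|B y| + 1) < sgn * (A y + t₀ * B y) := by
        rw [← lt_div_iff₀ hBpos]; exact h2
      have h4 : -(|s - t₀| * |B y|) ≤ (s - t₀) * (sgn * B y) := by
        have : |(s - t₀) * (sgn * B y)| = |s - t₀| * |B y| := by
          rw [abs_mul, abs_mul, habs1, one_mul]
        linarith [neg_abs_le ((s - t₀) * (sgn * B y))]
      have h5 : sgn * (A y + s * B y) = sgn * (A y + t₀ * B y) + (s - t₀) * (sgn * B y) := by
        ring
      nlinarith [abs_nonneg (s - t₀), abs_nonneg (B y)]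
  -- the positive count at t₀ is < n
  have hgt₀ : g t₀ < n := by
    by_contra hcon
    push_neg at hcon
    set F := S.filter fun y => 0 < A y + t₀ * B y with hF
    have hFne : F.Nonempty := by
      rw [← Finset.card_pos]
      have : g t₀ = F.card := rfl
      omega
    obtain ⟨δ, hδpos, hδ⟩ := persist F 1 hFne (Or.inl rfl)
      (by intro y hy; simp only [hF, Finset.mem_filter] at hy; linarith [hy.2])
    obtain ⟨a, haA, ha⟩ : ∃ a ∈ Aset, a < t₀ + δ := by
      by_contra hno
      push_neg at hno
      have : t₀ + δ ≤ t₀ := le_csInf hne hno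
      linarith
    have hat₀ : t₀ ≤ a := csInf_le hbdd haA
    have : n ≤ g a := by
      have hsub : F ⊆ S.filter fun y => 0 < A y + a * B y := by
        intro y hy
        have h1 := hδ a (by rw [abs_sub_lt_iff]; constructor <;> linarith) y hy
        simp only [hF, Finset.mem_filter] at hy ⊢
        refine ⟨hy.1, by linarith [h1]⟩
      calc n ≤ F.card := hcon
        _ ≤ _ := Finset.card_le_card hsub
    have := haA.2; omega
  -- t₀ is positive
  have ht₀pos : 0 < t₀ := by
    rcases lt_or_eq_of_le ht₀0 with h | h
    · exact h
    · exfalso; rw [← h] at hgt₀; omega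
  -- the negative count at t₀ is < n
  have hneg : (S.filter fun y => A y + t₀ * B y < 0).card < n := by
    set G := S.filter fun y => A y + t₀ * B y < 0 with hG
    rcases Finset.eq_empty_or_nonempty G with hGe | hGne
    · rw [hGe]; simpa using (show 0 < n by omega)
    obtain ⟨δ, hδpos, hδ⟩ := persist G (-1) hGne (Or.inr rfl)
      (by intro y hy; simp only [hG, Finset.mem_filter] at hy; linarith [hy.2])
    set s : ℝ := max (t₀ / 2) (t₀ - δ / 2) with hs
    have hs0 : 0 ≤ s := le_trans (by linarith) (le_max_left _ _)
    have hst₀ : s < t₀ := by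
      rw [hs, max_lt_iff]; constructor <;> linarith
    have hsδ : |s - t₀| < δ := by
      rw [abs_sub_lt_iff]
      have : t₀ - δ / 2 ≤ s := le_max_right _ _
      constructor <;> linarith
    have hsnotin : s ∉ Aset := fun hsin => absurd (csInf_le hbdd hsin) (by linarith)
    have hgs : n ≤ g s := by
      by_contra hcon
      push_neg at hcon
      exact hsnotin ⟨⟨hs0, by linarith⟩, hcon⟩
    have hGsub : G ⊆ S.filter fun y => A y + s * B y < 0 := by
      intro y hy
      have h1 := hδ s hsδ y hy
      simp only [hG, Finset.mem_filter] at hy ⊢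
      refine ⟨hy.1, by linarith [h1]⟩
    have h2 := hcount s
    have h3 : G.card ≤ (S.filter fun y => A y + s * B y < 0).card :=
      Finset.card_le_card hGsub
    omega
  exact ⟨t₀, hgt₀, hneg⟩

/-- Sweep lemma: if some open halfplane bounded by a line through `q ∈ S` contains at least
`n` points, then there is a line through `q` with fewer than `n` points strictly on each side. -/
private lemma sweep (S : Finset E2) (n : ℕ) (hn : 1 ≤ n) (hcard : S.card = 2 * n)
    (q : E2) (hq : q ∈ S) (c₀ : E2) (hc₀ : c₀ ≠ 0)
    (h : n ≤ (S.filter fun y => ⟪q, c₀⟫ < ⟪y, c₀⟫).card) :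
    ∃ c : E2, c ≠ 0 ∧ (S.filter fun y => ⟪q, c⟫ < ⟪y, c⟫).card < n ∧
      (S.filter fun y => ⟪y, c⟫ < ⟪q, c⟫).card < n := by
  classical
  set e₀ : E2 := Jrot c₀ with he₀def
  have he₀ : e₀ ≠ 0 := Jrot_ne_zero hc₀
  have horth : ⟪c₀, e₀⟫ = 0 := Jrot_orth c₀
  by_cases hcase : (S.filter fun y => ⟪q, e₀⟫ < ⟪y, e₀⟫).card < n ∧
      (S.filter fun y => ⟪y, e₀⟫ < ⟪q, e₀⟫).card < n
  · exact ⟨e₀, he₀, hcase⟩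
  obtain ⟨e, he, horth', hBneg⟩ : ∃ e : E2, e ≠ 0 ∧ ⟪c₀, e⟫ = 0 ∧
      n ≤ (S.filter fun y => ⟪y, e⟫ < ⟪q, e⟫).card := by
    rw [not_and_or] at hcase
    rcases hcase with hc1 | hc2
    · push_neg at hc1
      refine ⟨-e₀, neg_ne_zero.2 he₀, by rw [inner_neg_right, horth, neg_zero], ?_⟩
      calc n ≤ (S.filter fun y => ⟪q, e₀⟫ < ⟪y, e₀⟫).card := hc1
        _ = (S.filter fun y => ⟪y, -e₀⟫ < ⟪q, -e₀⟫).card := by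
            refine congrArg Finset.card (Finset.filter_congr ?_)
            intro y _
            simp only [inner_neg_right, neg_lt_neg_iff]
    · push_neg at hc2
      exact ⟨e₀, he₀, horth, hc2⟩
  set A : E2 → ℝ := fun y => ⟪y, c₀⟫ - ⟪q, c₀⟫ with hAdef
  set B : E2 → ℝ := fun y => ⟪y, e⟫ - ⟪q, e⟫ with hBdef
  set Neg := S.filter fun y => B y < 0 with hNegdef
  have hNegeq : Neg = S.filter fun y => ⟪y, e⟫ < ⟪q, e⟫ := by
    apply Finset.filter_congr
    intro y _
    simp only [hBdef, sub_neg]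
  have hNegcard : n ≤ Neg.card := by rw [hNegeq]; exact hBneg
  have hNegne : Neg.Nonempty := by rw [← Finset.card_pos]; omega
  set T : ℝ := max (Neg.sup' hNegne fun y => A y / (-B y)) 0 + 1 with hTdef
  have hT0 : (0:ℝ) ≤ T := by
    have h1 := le_max_right (Neg.sup' hNegne fun y => A y / (-B y)) 0
    rw [hTdef]; linarith
  have hTneg : ∀ y ∈ Neg, A y + T * B y < 0 := by
    intro y hy
    have hBy : B y < 0 := (Finset.mem_filter.1 hy).2
    have h1 : A y / (-B y) ≤ Neg.sup' hNegne fun y => A y / (-B y) :=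
      Finset.le_sup' (fun y => A y / (-B y)) hy
    have h2 : A y / (-B y) < T := by
      have := le_max_left (Neg.sup' hNegne fun y => A y / (-B y)) 0
      rw [hTdef]; linarith
    have h3 : A y < T * (-B y) := by
      rw [div_lt_iff₀ (by linarith : (0:ℝ) < -B y)] at h2
      linarith
    linarith
  have hT' : (S.filter fun y => 0 < A y + T * B y).card < n := by
    set P := S.filter fun y => 0 < A y + T * B y with hPdef
    have hsub : P ∪ Neg ⊆ S.erase q := by
      intro a ha
      have hmem : a ∈ S := by
        rcases Finset.mem_union.1 ha with h' | h' <;> exact Finset.mem_filter.1 h' |>.1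
      refine Finset.mem_erase.2 ⟨?_, hmem⟩
      intro heq
      have hAq : A a = 0 := by rw [heq]; simp [hAdef]
      have hBq : B a = 0 := by rw [heq]; simp [hBdef]
      rcases Finset.mem_union.1 ha with h' | h'
      · have := (Finset.mem_filter.1 h').2; rw [hAq, hBq] at this; simp at this
      · have := (Finset.mem_filter.1 h').2; rw [hBq] at this; simp at this
    have hdisj : Disjoint P Neg := by
      rw [Finset.disjoint_left]
      intro a ha hb
      have h1 := (Finset.mem_filter.1 ha).2
      have h2 := hTneg a hb
      linarith
    have h1 : P.card + Neg.card ≤ (S.erase q).card := by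
      rw [← Finset.card_union_of_disjoint hdisj]
      exact Finset.card_le_card hsub
    have h2 : (S.erase q).card = S.card - 1 := Finset.card_erase_of_mem hq
    omega
  have h0 : n ≤ (S.filter fun y => 0 < A y).card := by
    calc n ≤ (S.filter fun y => ⟪q, c₀⟫ < ⟪y, c₀⟫).card := h
      _ = (S.filter fun y => 0 < A y).card := by
          refine congrArg Finset.card (Finset.filter_congr ?_)
          intro y _
          simp only [hAdef, sub_pos]
  obtain ⟨t, ht1, ht2⟩ := core_sweep S n hn hcard q hq A B (by simp [hAdef]) (by simp [hBdef])
    T hT0 h0 hT'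
  refine ⟨c₀ + t • e, ?_, ?_, ?_⟩
  · intro hzero
    have h1 : ⟪c₀, c₀ + t • e⟫ = 0 := by rw [hzero, inner_zero_right]
    rw [inner_add_right, real_inner_smul_right, horth', mul_zero, add_zero] at h1
    exact hc₀ (inner_self_eq_zero.1 h1)
  · calc (S.filter fun y => ⟪q, c₀ + t • e⟫ < ⟪y, c₀ + t • e⟫).card
        = (S.filter fun y => 0 < A y + t * B y).card := by
          refine congrArg Finset.card (Finset.filter_congr ?_)
          intro y _
          simp only [inner_add_right, real_inner_smul_right, hAdef, hBdef, eq_iff_iff]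
          constructor <;> intro <;> linarith
      _ < n := ht1
  · calc (S.filter fun y => ⟪y, c₀ + t • e⟫ < ⟪q, c₀ + t • e⟫).card
        = (S.filter fun y => A y + t * B y < 0).card := by
          refine congrArg Finset.card (Finset.filter_congr ?_)
          intro y _
          simp only [inner_add_right, real_inner_smul_right, hAdef, hBdef, eq_iff_iff]
          constructor <;> intro <;> linarith
      _ < n := ht2

private lemma depth (n : ℕ) (hn : 1 ≤ n) (S : Finset E2)
    (hcard : S.card = 2 * n) (x : E2) (hx : x ∉ S)
    (hthrough : ∀ (c : E2) (lam : ℝ), c ≠ 0 → IsPerfectEven S c lam → ⟪x, c⟫ = lam)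
    (hbal : ∀ (c : E2) (lam : ℝ) (v : E2), c ≠ 0 → v ≠ 0 → IsPerfectEven S c lam →
      ({y : E2 | ⟪y, c⟫ = lam} = {y : E2 | ∃ t : ℝ, y = x + t • v}) →
      rayCount S x v = rayCount S x (-v)) :
    ∀ c : E2, (S.filter fun y => ⟪x, c⟫ < ⟪y, c⟫).card ≤ n := by
  classical
  intro c
  by_contra hcon
  push_neg at hcon
  have hc : c ≠ 0 := by
    rintro rfl
    simp only [inner_zero_right, lt_irrefl, Finset.filter_false, Finset.card_empty] at hcon
    omega
  set U := S.filter fun y => ⟪x, c⟫ < ⟪y, c⟫ with hUdef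
  set D := S.filter fun y => ⟪y, c⟫ < ⟪x, c⟫ with hDdef
  have hUD : U.card + D.card ≤ 2 * n := by
    have hdisj : Disjoint U D := by
      rw [Finset.disjoint_left]
      intro a ha hb
      have h1 := (Finset.mem_filter.1 ha).2
      have h2 := (Finset.mem_filter.1 hb).2
      linarith
    calc U.card + D.card = (U ∪ D).card := (Finset.card_union_of_disjoint hdisj).symm
      _ ≤ S.card := Finset.card_le_card (Finset.union_subset
          (Finset.filter_subset _ _) (Finset.filter_subset _ _))
      _ = 2 * n := hcard
  have hD : D.card < n := by omega
  -- the "slope" function along c and the ray-direction normalization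
  set p : E2 → ℝ := fun y => ⟪y, c⟫ - ⟪x, c⟫ with hpdef
  set r : E2 → E2 := fun y => (p y)⁻¹ • (y - x) with hrdef
  -- For u in U, its ray direction has equal ray counts
  have hbalance : ∀ u ∈ U, rayCount S x (r u) = rayCount S x (-(r u)) := by
    intro u hu
    have huS : u ∈ S := (Finset.mem_filter.1 hu).1
    have hup : 0 < p u := by
      have := (Finset.mem_filter.1 hu).2
      simp only [hpdef]; linarith
    have hupne : p u ≠ 0 := ne_of_gt hup
    -- u is "shallow": some halfplane with boundary through u has ≥ n points
    obtain ⟨d, hd, hshallow⟩ : ∃ d : E2, d ≠ 0 ∧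
        n ≤ (S.filter fun y => ⟪u, d⟫ < ⟪y, d⟫).card := by
      by_cases hcase : (S.filter fun y => ⟪u, c⟫ < ⟪y, c⟫).card < n ∧
          (S.filter fun y => ⟪y, c⟫ < ⟪u, c⟫).card < n
      · exfalso
        have hperf : IsPerfectEven S c ⟪u, c⟫ := by
          constructor <;> rw [hcard] <;> omega
        have := hthrough c ⟪u, c⟫ hc hperf
        have h2 := (Finset.mem_filter.1 hu).2
        rw [this] at h2
        exact lt_irrefl _ h2
      · rw [not_and_or] at hcase
        rcases hcase with h1 | h1 <;> push_neg at h1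
        · exact ⟨c, hc, h1⟩
        · refine ⟨-c, neg_ne_zero.2 hc, ?_⟩
          calc n ≤ (S.filter fun y => ⟪y, c⟫ < ⟪u, c⟫).card := h1
            _ = (S.filter fun y => ⟪u, -c⟫ < ⟪y, -c⟫).card := by
                refine congrArg Finset.card (Finset.filter_congr ?_)
                intro y _
                simp only [inner_neg_right, neg_lt_neg_iff]
    -- get a perfect line through u
    obtain ⟨c', hc', hcnt1, hcnt2⟩ := sweep S n hn hcard u huS d hd hshallow
    have hperf : IsPerfectEven S c' ⟪u, c'⟫ := by
      constructor <;> rw [hcard] <;> omega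
    have hxl : ⟪x, c'⟫ = ⟪u, c'⟫ := hthrough c' ⟪u, c'⟫ hc' hperf
    -- the direction v = r u
    set v := r u with hvdef
    have hvc : ⟪v, c⟫ = 1 := by
      rw [hvdef, hrdef]
      simp only
      rw [real_inner_smul_left, inner_sub_left]
      exact inv_mul_cancel₀ hupne
    have hvne : v ≠ 0 := by
      intro h0
      rw [h0, inner_zero_left] at hvc
      norm_num at hvc
    have hvc' : ⟪v, c'⟫ = 0 := by
      rw [hvdef, hrdef]
      simp only
      rw [real_inner_smul_left, inner_sub_left, ← hxl]
      ring
    -- the line through u with normal c' is the line through x with direction v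
    have hset : {y : E2 | ⟪y, c'⟫ = ⟪u, c'⟫} = {y : E2 | ∃ t : ℝ, y = x + t • v} := by
      ext y
      simp only [Set.mem_setOf_eq]
      constructor
      · intro hy
        have hyx : ⟪y - x, c'⟫ = 0 := by
          rw [inner_sub_left, hy, hxl]; ring
        obtain ⟨t, ht⟩ := span_of_orth hc' hvne hvc' hyx
        exact ⟨t, by rw [← ht]; abel⟩
      · rintro ⟨t, rfl⟩
        rw [inner_add_left, real_inner_smul_left, hvc', mul_zero, add_zero, hxl]
    exact hbal c' ⟪u, c'⟫ v hc' hvne hperf hset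
  -- fibers of the normalization map
  have hrayU : ∀ v : E2, ⟪v, c⟫ = 1 →
      (U.filter fun y => r y = v) = S.filter fun y => ∃ t : ℝ, 0 < t ∧ y = x + t • v := by
    intro v hvc
    ext y
    rw [hUdef]
    simp only [Finset.mem_filter]
    constructor
    · rintro ⟨⟨hyS, hyU⟩, hyr⟩
      have hyp : 0 < p y := by simp only [hpdef]; linarith
      refine ⟨hyS, p y, hyp, ?_⟩
      have : y - x = p y • v := by
        rw [← hyr, hrdef]
        simp only
        rw [smul_smul, mul_inv_cancel₀ (ne_of_gt hyp), one_smul]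
      rw [← this]; abel
    · rintro ⟨hyS, t, ht, rfl⟩
      have hpy : p (x + t • v) = t := by
        simp only [hpdef, inner_add_left, real_inner_smul_left, hvc]
        ring
      refine ⟨⟨hyS, ?_⟩, ?_⟩
      · have : ⟪x + t • v, c⟫ = ⟪x, c⟫ + t := by
          rw [inner_add_left, real_inner_smul_left, hvc]; ring
        linarith [this, ht]
      · rw [hrdef]
        simp only
        rw [hpy, add_sub_cancel_left, smul_smul, inv_mul_cancel₀ (ne_of_gt ht), one_smul]
  have hrayD : ∀ v : E2, ⟪v, c⟫ = 1 →
      (D.filter fun y => r y = v) = S.filter fun y => ∃ t : ℝ, 0 < t ∧ y = x + t • (-v) := by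
    intro v hvc
    ext y
    rw [hDdef]
    simp only [Finset.mem_filter]
    constructor
    · rintro ⟨⟨hyS, hyD⟩, hyr⟩
      have hyp : p y < 0 := by simp only [hpdef]; linarith
      refine ⟨hyS, -(p y), by linarith, ?_⟩
      have h1 : y - x = p y • v := by
        rw [← hyr, hrdef]
        simp only
        rw [smul_smul, mul_inv_cancel₀ (ne_of_lt hyp), one_smul]
      have h2 : y - x = (-(p y)) • (-v) := by rw [smul_neg, neg_smul, neg_neg]; exact h1
      rw [← h2]; abel
    · rintro ⟨hyS, t, ht, rfl⟩
      have hpy : p (x + t • (-v)) = -t := by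
        simp only [hpdef, inner_add_left, real_inner_smul_left, inner_neg_left, hvc]
        ring
      refine ⟨⟨hyS, ?_⟩, ?_⟩
      · have : ⟪x + t • (-v), c⟫ = ⟪x, c⟫ + (-t) := by
          rw [inner_add_left, real_inner_smul_left, inner_neg_left, hvc]; ring
        linarith [this, ht]
      · rw [hrdef]
        simp only
        rw [hpy, add_sub_cancel_left]
        rw [show t • (-v) = (-t) • v by rw [neg_smul, smul_neg]]
        rw [smul_smul, inv_mul_cancel₀ (by linarith : (-t : ℝ) ≠ 0), one_smul]
  -- normalization values on U
  have hpvone : ∀ u ∈ U, ⟪r u, c⟫ = 1 := by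
    intro u hu
    have hup : 0 < p u := by
      have := (Finset.mem_filter.1 hu).2
      simp only [hpdef]; linarith
    rw [hrdef]
    simp only
    rw [real_inner_smul_left, inner_sub_left]
    exact inv_mul_cancel₀ (ne_of_gt hup)
  -- main count
  set V := U.image r with hVdef
  have hcardU : U.card = ∑ v ∈ V, (U.filter fun y => r y = v).card :=
    Finset.card_eq_sum_card_fiberwise fun y hy => Finset.mem_image_of_mem r hy
  have hsum : ∑ v ∈ V, (U.filter fun y => r y = v).card
      = ∑ v ∈ V, (D.filter fun y => r y = v).card := by
    apply Finset.sum_congr rfl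
    intro v hv
    obtain ⟨u, hu, huv⟩ := Finset.mem_image.1 hv
    have hvone : ⟪v, c⟫ = 1 := huv ▸ hpvone u hu
    have hbal' := huv ▸ hbalance u hu
    rw [hrayU v hvone, hrayD v hvone]
    calc (S.filter fun y => ∃ t : ℝ, 0 < t ∧ y = x + t • v).card
        = rayCount S x v := rfl
      _ = rayCount S x (-v) := hbal'
      _ = (S.filter fun y => ∃ t : ℝ, 0 < t ∧ y = x + t • (-v)).card := rfl
  have hsumD : ∑ v ∈ V, (D.filter fun y => r y = v).card ≤ D.card := by
    set D' := D.filter fun y => r y ∈ V with hD'def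
    have h1 : D'.card = ∑ v ∈ V, (D'.filter fun y => r y = v).card :=
      Finset.card_eq_sum_card_fiberwise fun y hy => (Finset.mem_filter.1 hy).2
    have h2 : ∀ v ∈ V, (D'.filter fun y => r y = v) = D.filter fun y => r y = v := by
      intro v hv
      ext y
      simp only [hD'def, Finset.filter_filter, Finset.mem_filter]
      constructor
      · rintro ⟨hyD, _, hyv⟩; exact ⟨hyD, hyv⟩
      · rintro ⟨hyD, hyv⟩; exact ⟨hyD, hyv ▸ hv, hyv⟩
    calc ∑ v ∈ V, (D.filter fun y => r y = v).card
        = ∑ v ∈ V, (D'.filter fun y => r y = v).card :=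
          Finset.sum_congr rfl fun v hv => congrArg Finset.card (h2 v hv).symm
      _ = D'.card := h1.symm
      _ ≤ D.card := Finset.card_le_card (Finset.filter_subset _ _)
  have : U.card ≤ D.card := by
    rw [hcardU, hsum]; exact hsumD
  omega


/-- let `S` be a set of `2n` points in `ℝ²` and `x ∉ S` a point such that every
perfect line contains `x` and every perfect line is even-balanced about `x`.  Then `x` is a
winning point for Alice; in particular Alice wins. -/
theorem stmt10 (n : ℕ) (hn : 1 ≤ n) (S : Finset (EuclideanSpace ℝ (Fin 2)))
    (hcard : S.card = 2 * n) (x : EuclideanSpace ℝ (Fin 2)) (hx : x ∉ S)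
    (hthrough : ∀ (c : EuclideanSpace ℝ (Fin 2)) (lam : ℝ), c ≠ 0 →
      IsPerfectEven S c lam → ⟪x, c⟫ = lam)
    (hbal : ∀ (c : EuclideanSpace ℝ (Fin 2)) (lam : ℝ) (v : EuclideanSpace ℝ (Fin 2)),
      c ≠ 0 → v ≠ 0 → IsPerfectEven S c lam →
      ({y : EuclideanSpace ℝ (Fin 2) | ⟪y, c⟫ = lam} =
        {y : EuclideanSpace ℝ (Fin 2) | ∃ t : ℝ, y = x + t • v}) →
      rayCount S x v = rayCount S x (-v)) :
    IsWinningPoint S x ∧ ∃ a, IsWinningPoint S a := by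
  classical
  have hwin : IsWinningPoint S x := by
    intro b
    by_cases hbx : b = x
    · rw [hbx]
    · set c : EuclideanSpace ℝ (Fin 2) := b - x with hcdef
      have hc : c ≠ 0 := sub_ne_zero.2 hbx
      have hdepth := depth n hn S hcard x hx hthrough hbal c
      set μ : ℝ := ‖b‖ ^ 2 - ‖x‖ ^ 2 with hμdef
      have hyc : ∀ y : EuclideanSpace ℝ (Fin 2), ⟪y, c⟫ = ⟪y, b⟫ - ⟪y, x⟫ := by
        intro y; rw [hcdef, inner_sub_right]
      have hkey : ∀ y : EuclideanSpace ℝ (Fin 2), dist b y < dist x y ↔ μ < 2 * ⟪y, c⟫ := by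
        intro y
        rw [dist_eq_norm, dist_eq_norm,
          ← pow_lt_pow_iff_left₀ (norm_nonneg (b - y)) (norm_nonneg (x - y)) two_ne_zero,
          norm_sub_sq_real, norm_sub_sq_real]
        have h1 := real_inner_comm b y
        have h2 := real_inner_comm x y
        have h3 := hyc y
        constructor <;> intro <;> [skip; skip] <;> rw [hμdef] at * <;> linarith
      have hkey2 : ∀ y : EuclideanSpace ℝ (Fin 2), dist x y < dist b y ↔ 2 * ⟪y, c⟫ < μ := by
        intro y
        rw [dist_eq_norm, dist_eq_norm,
          ← pow_lt_pow_iff_left₀ (norm_nonneg (x - y)) (norm_nonneg (b - y)) two_ne_zero,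
          norm_sub_sq_real, norm_sub_sq_real]
        have h1 := real_inner_comm b y
        have h2 := real_inner_comm x y
        have h3 := hyc y
        constructor <;> intro <;> [skip; skip] <;> rw [hμdef] at * <;> linarith
      have hxc : 2 * ⟪x, c⟫ < μ := by
        have h1 : ‖c‖ ^ 2 = μ - 2 * ⟪x, c⟫ := by
          rw [hcdef, norm_sub_sq_real, hμdef]
          have h2 := real_inner_comm b x
          have h3 : ⟪x, b - x⟫ = ⟪x, b⟫ - ⟪x, x⟫ := inner_sub_right x b x
          have h4 : ⟪x, x⟫ = ‖x‖ ^ 2 := real_inner_self_eq_norm_sq x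
          linarith
        have h5 : (0:ℝ) < ‖c‖ ^ 2 := by
          have h6 : (0:ℝ) < ‖c‖ := norm_pos_iff.2 hc
          positivity
        linarith
      have hle1 : claims S b x ≤ n := by
        rw [claims]
        calc (S.filter fun y => dist b y < dist x y).card
            ≤ (S.filter fun y => ⟪x, c⟫ < ⟪y, c⟫).card := by
              apply Finset.card_le_card
              intro y hy
              rw [Finset.mem_filter] at hy ⊢
              refine ⟨hy.1, ?_⟩
              have := (hkey y).1 hy.2
              linarith
          _ ≤ n := hdepth
      have hge1 : n ≤ claims S x b := by
        rw [claims]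
        have hsplit := Finset.card_filter_add_card_filter_not
          (s := S) (p := fun y => ⟪x, c⟫ < ⟪y, c⟫)
        have hsub : (S.filter fun y => ¬ ⟪x, c⟫ < ⟪y, c⟫)
            ⊆ S.filter fun y => dist x y < dist b y := by
          intro y hy
          rw [Finset.mem_filter] at hy ⊢
          refine ⟨hy.1, ?_⟩
          rw [hkey2 y]
          push_neg at hy
          linarith [hy.2]
        have h6 := Finset.card_le_card hsub
        have h7 : (S.filter fun y => ¬ ⟪x, c⟫ < ⟪y, c⟫).card ≥ n := by
          rw [hcard] at hsplit
          omega
        omega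
      exact le_trans hle1 hge1
  exact ⟨hwin, x, hwin⟩
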